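/- In the one-step softmax bandit setting, the Euclidean norm of the policy gradient is bounded by twice the entropy: ‖∇V(θ)‖ ≤ 2·H(π_θ), where ∇V(θ) has coordinates π_θ(b)(r(b) - V(θ)) and rewards take values in [0,1]. -/

import Mathlib

open Real Finset

noncomputable def softmax {A : Type*} [Fintype A] (θ : A → ℝ) (a : A) : ℝ :=
  Real.exp (θ a) / ∑ a', Real.exp (θ a')

noncomputable def V {A : Type*} [Fintype A] (r : A → ℝ) (θ : A → ℝ) : ℝ :=
  ∑ a, softmax θ a * r a

lemma softmax_pos {A : Type*} [Fintype A] [Nonempty A] (θ : A → ℝ) (a : A) :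
    0 < softmax θ a := by
  unfold softmax
  exact div_pos (Real.exp_pos _) (Finset.sum_pos (fun _ _ => Real.exp_pos _) univ_nonempty)

lemma softmax_sum {A : Type*} [Fintype A] [Nonempty A] (θ : A → ℝ) :
    ∑ a, softmax θ a = 1 := by
  unfold softmax
  rw [← Finset.sum_div]
  exact div_self (ne_of_gt (Finset.sum_pos (fun _ _ => Real.exp_pos _) univ_nonempty))

lemma softmax_le_one {A : Type*} [Fintype A] [Nonempty A] (θ : A → ℝ) (a : A) :
    softmax θ a ≤ 1 := by
  rw [← softmax_sum θ]
  exact Finset.single_le_sum (fun b _ => (softmax_pos θ b).le) (mem_univ a)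

theorem softmax_bandit_grad_le_two_entropy {A : Type*} [Fintype A] [Nonempty A]
    (θ : A → ℝ) (r : A → ℝ) (hr : ∀ a, r a ∈ Set.Icc (0 : ℝ) 1) :
    Real.sqrt (∑ b, (softmax θ b * (r b - V r θ)) ^ 2) ≤
      2 * (-∑ a, softmax θ a * Real.log (softmax θ a)) := by
  classical
  set p := softmax θ with hp
  have hpos : ∀ a, 0 < p a := softmax_pos θ
  have hle1 : ∀ a, p a ≤ 1 := softmax_le_one θ
  -- key bound: |r b - V| ≤ 1 - p b
  have hdev : ∀ b, |r b - V r θ| ≤ 1 - p b := by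
    intro b
    have hVsplit : V r θ = p b * r b + ∑ a ∈ univ.erase b, p a * r a := by
      rw [V, ← Finset.add_sum_erase _ _ (mem_univ b)]
    have hsum_erase : ∑ a ∈ univ.erase b, p a = 1 - p b := by
      have := softmax_sum θ
      rw [← Finset.add_sum_erase _ _ (mem_univ b)] at this
      linarith
    have h1 : r b - V r θ ≤ 1 - p b := by
      have hrest : 0 ≤ ∑ a ∈ univ.erase b, p a * r a :=
        Finset.sum_nonneg fun a _ => mul_nonneg (hpos a).le (hr a).1
      have : r b - V r θ ≤ r b * (1 - p b) := by
        rw [hVsplit]; ring_nf; nlinarith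
      calc r b - V r θ ≤ r b * (1 - p b) := this
        _ ≤ 1 * (1 - p b) := by
            apply mul_le_mul_of_nonneg_right (hr b).2; linarith [hle1 b]
        _ = 1 - p b := one_mul _
    have h2 : V r θ - r b ≤ 1 - p b := by
      have hrest : ∑ a ∈ univ.erase b, p a * r a ≤ 1 - p b := by
        rw [← hsum_erase]
        apply Finset.sum_le_sum
        intro a _
        nlinarith [(hpos a).le, (hr a).2]
      have : 0 ≤ p b * r b := mul_nonneg (hpos b).le (hr b).1
      nlinarith [(hr b).1, hle1 b, mul_nonneg (sub_nonneg.2 (hle1 b)) (hr b).1]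
    rw [abs_le]; constructor <;> linarith
  -- sqrt of sum of squares ≤ sum of abs
  have step1 : Real.sqrt (∑ b, (p b * (r b - V r θ)) ^ 2) ≤
      ∑ b, |p b * (r b - V r θ)| := by
    rw [← Real.sqrt_sq (Finset.sum_nonneg fun b _ => abs_nonneg _)]
    apply Real.sqrt_le_sqrt
    calc ∑ b, (p b * (r b - V r θ)) ^ 2 = ∑ b, |p b * (r b - V r θ)| ^ 2 := by
          simp only [sq_abs]
      _ ≤ (∑ b, |p b * (r b - V r θ)|) ^ 2 :=
          Finset.sum_sq_le_sq_sum_of_nonneg fun b _ => abs_nonneg _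
  have step2 : ∑ b, |p b * (r b - V r θ)| ≤ ∑ b, p b * (1 - p b) := by
    apply Finset.sum_le_sum
    intro b _
    rw [abs_mul, abs_of_pos (hpos b)]
    exact mul_le_mul_of_nonneg_left (hdev b) (hpos b).le
  have step3 : ∑ b, p b * (1 - p b) ≤ ∑ b, p b * (-Real.log (p b)) := by
    apply Finset.sum_le_sum
    intro b _
    apply mul_le_mul_of_nonneg_left _ (hpos b).le
    have := Real.log_le_sub_one_of_pos (hpos b)
    linarith
  have hent : 0 ≤ -∑ a, p a * Real.log (p a) := by
    rw [← Finset.sum_neg_distrib]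
    apply Finset.sum_nonneg
    intro a _
    have hlog : Real.log (p a) ≤ 0 := Real.log_nonpos (hpos a).le (hle1 a)
    nlinarith [(hpos a).le]
  calc Real.sqrt (∑ b, (p b * (r b - V r θ)) ^ 2)
      ≤ ∑ b, p b * (-Real.log (p b)) := le_trans step1 (le_trans step2 step3)
    _ = -∑ a, p a * Real.log (p a) := by
        rw [← Finset.sum_neg_distrib]; congr 1; ext a; ring
    _ ≤ 2 * (-∑ a, p a * Real.log (p a)) := by linarith
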